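/- Consider the action of Γ₀(p) on pairs (v,w) ∈ ℤ² × ℤ² by ρ_γ(v,w) = (γv, γ^{-T}w), and let L ⊂ ℤ² be the set of (v₁,v₂) with gcd(v₁,p)=1 and v₂ ∈ pℤ. Then for every n ≥ 1, a complete set of representatives for the Γ₀(p)-orbits on {(v,w) ∈ L × ℤ² : vᵀw = n} is given by the pairs ((d,0)ᵀ, (d', b)ᵀ) with dd' = n, d > 0, gcd(d,p) = 1, and 0 ≤ b ≤ d'-1. -/

import Mathlib

open Matrix

lemma aux_invT_mulVec {γ : Matrix (Fin 2) (Fin 2) ℤ} (h : γ.det = 1)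
    {x w : Fin 2 → ℤ} (hx : γᵀ.mulVec w = x) : (γ⁻¹)ᵀ.mulVec x = w := by
  have hu : IsUnit (γᵀ).det := by rw [Matrix.det_transpose, h]; exact isUnit_one
  rw [Matrix.transpose_nonsing_inv, ← hx, Matrix.mulVec_mulVec,
    Matrix.nonsing_inv_mul _ hu, Matrix.one_mulVec]

lemma aux_invT_mulVec' {γ : Matrix (Fin 2) (Fin 2) ℤ} (h : γ.det = 1)
    {x w : Fin 2 → ℤ} (hx : (γ⁻¹)ᵀ.mulVec x = w) : γᵀ.mulVec w = x := by
  have hu : IsUnit (γᵀ).det := by rw [Matrix.det_transpose, h]; exact isUnit_one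
  rw [← hx, Matrix.transpose_nonsing_inv, Matrix.mulVec_mulVec,
    Matrix.mul_nonsing_inv _ hu, Matrix.one_mulVec]

/-- A complete set of representatives for the `Γ₀(p)`-orbits (under
`ρ_γ(v,w) = (γv, γ^{-T}w)`) on pairs `(v,w) ∈ L × ℤ²` with `vᵀw = n` is given
by the pairs `((d,0), (d',b))` with `dd' = n`, `d > 0`, `gcd(d,p) = 1` and
`0 ≤ b ≤ d'-1`. -/
theorem gamma0_orbit_representatives (p : ℤ) (hp : 0 < p) (n : ℤ) (hn : 1 ≤ n) :
    let Γ₀ : Set (Matrix (Fin 2) (Fin 2) ℤ) := {γ | γ.det = 1 ∧ p ∣ γ 1 0}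
    let L : Set (Fin 2 → ℤ) := {v | IsCoprime (v 0) p ∧ p ∣ v 1}
    (∀ v ∈ L, ∀ w : Fin 2 → ℤ, v ⬝ᵥ w = n →
      ∃ d d' b : ℤ, d * d' = n ∧ 0 < d ∧ IsCoprime d p ∧ 0 ≤ b ∧ b ≤ d' - 1 ∧
        ∃ γ ∈ Γ₀, γ.mulVec ![d, 0] = v ∧ (γ⁻¹)ᵀ.mulVec ![d', b] = w) ∧
    (∀ d d' b e e' c : ℤ,
      d * d' = n → 0 < d → IsCoprime d p → 0 ≤ b → b ≤ d' - 1 →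
      e * e' = n → 0 < e → IsCoprime e p → 0 ≤ c → c ≤ e' - 1 →
      (∃ γ ∈ Γ₀, γ.mulVec ![d, 0] = ![e, 0] ∧
        (γ⁻¹)ᵀ.mulVec ![d', b] = ![e', c]) →
      d = e ∧ d' = e' ∧ b = c) := by
  intro Γ₀ L
  constructor
  · -- existence
    rintro v ⟨hv0, hv1⟩ w hvw
    have hn' : v 0 * w 0 + v 1 * w 1 = n := by
      simpa [dotProduct, Fin.sum_univ_two] using hvw
    set d : ℤ := (Int.gcd (v 0) (v 1) : ℤ) with hd_def
    have hdvd0 : d ∣ v 0 := Int.gcd_dvd_left _ _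
    have hdvd1 : d ∣ v 1 := Int.gcd_dvd_right _ _
    have hgpos : 0 < Int.gcd (v 0) (v 1) := by
      rcases Nat.eq_zero_or_pos (Int.gcd (v 0) (v 1)) with h | h
      · exfalso
        rw [Int.gcd_eq_zero_iff] at h
        rw [h.1, h.2] at hn'
        simp at hn'
        omega
      · exact h
    have hdpos : 0 < d := by rw [hd_def]; exact_mod_cast hgpos
    set u0 : ℤ := v 0 / d with hu0_def
    set u1 : ℤ := v 1 / d with hu1_def
    have hdu0 : d * u0 = v 0 := Int.mul_ediv_cancel' hdvd0
    have hdu1 : d * u1 = v 1 := Int.mul_ediv_cancel' hdvd1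
    have hcopu : IsCoprime u0 u1 := by
      rw [Int.isCoprime_iff_gcd_eq_one]
      exact Int.gcd_div_gcd_div_gcd hgpos
    obtain ⟨x, y, hxy⟩ := hcopu
    have hcop : IsCoprime d p := hv0.of_isCoprime_of_dvd_left hdvd0
    have hpu1 : p ∣ u1 := by
      refine (hcop.symm).dvd_of_dvd_mul_left ?_
      rw [hdu1]; exact hv1
    set d' : ℤ := u0 * w 0 + u1 * w 1 with hd'_def
    have hdd' : d * d' = n := by
      rw [hd'_def]
      calc d * (u0 * w 0 + u1 * w 1) = d * u0 * w 0 + d * u1 * w 1 := by ring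
      _ = n := by rw [hdu0, hdu1, hn']
    have hd'pos : 0 < d' := by nlinarith
    set b₀ : ℤ := -y * w 0 + x * w 1 with hb₀_def
    set k : ℤ := -(b₀ / d') with hk_def
    set b : ℤ := b₀ % d' with hb_def
    have hb : b = b₀ + k * d' := by
      rw [hb_def, hk_def, Int.emod_def]; ring
    refine ⟨d, d', b, hdd', hdpos, hcop, Int.emod_nonneg _ (ne_of_gt hd'pos),
      by have := Int.emod_lt_of_pos b₀ hd'pos; omega, ?_⟩
    set γ : Matrix (Fin 2) (Fin 2) ℤ := !![u0, -y + k*u0; u1, x + k*u1] with hγ_def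
    have hdet : γ.det = 1 := by
      rw [hγ_def, Matrix.det_fin_two_of]
      linear_combination hxy
    refine ⟨γ, ⟨hdet, by simpa [hγ_def] using hpu1⟩, ?_, ?_⟩
    · funext i
      fin_cases i <;>
        simp [hγ_def, Matrix.mulVec, dotProduct, Fin.sum_univ_two] <;>
        linarith [hdu0, hdu1, mul_comm d u0, mul_comm d u1]
    · refine aux_invT_mulVec hdet ?_
      funext i
      fin_cases i <;>
        simp [hγ_def, Matrix.mulVec, dotProduct, Fin.sum_univ_two,
          Matrix.transpose_apply]
      · exact hd'_def.symm
      · linear_combination hb.symm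
  · -- uniqueness
    rintro d d' b e e' c hdd' hd hcd hb0 hb1 hee' he hce hc0 hc1 ⟨γ, ⟨hdet, hpdvd⟩, h1, h2⟩
    have hd'pos : 0 < d' := by nlinarith
    have ha : γ 0 0 * d = e := by
      have := congrFun h1 0
      simpa [Matrix.mulVec, dotProduct, Fin.sum_univ_two] using this
    have hc00 : γ 1 0 = 0 := by
      have h10 := congrFun h1 1
      simp [Matrix.mulVec, dotProduct, Fin.sum_univ_two] at h10
      rcases h10 with h | h
      · exact h
      · omega
    have hdet2 : γ 0 0 * γ 1 1 = 1 := by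
      have := Matrix.det_fin_two γ
      rw [hdet, hc00] at this
      linarith [this]
    rcases Int.eq_one_or_neg_one_of_mul_eq_one' hdet2 with ⟨ha1, hδ1⟩ | ⟨ha1, hδ1⟩
    swap
    · exfalso; rw [ha1] at ha; nlinarith
    have hde : d = e := by rw [ha1, one_mul] at ha; exact ha
    have h3 : γᵀ.mulVec ![e', c] = ![d', b] := aux_invT_mulVec' hdet h2
    have h30 : γ 0 0 * e' + γ 1 0 * c = d' := by
      have := congrFun h3 0
      simpa [Matrix.mulVec, dotProduct, Fin.sum_univ_two,
        Matrix.transpose_apply] using this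
    have h31 : γ 0 1 * e' + γ 1 1 * c = b := by
      have := congrFun h3 1
      simpa [Matrix.mulVec, dotProduct, Fin.sum_univ_two,
        Matrix.transpose_apply] using this
    rw [ha1, one_mul, hc00, zero_mul, add_zero] at h30
    rw [hδ1, one_mul] at h31
    have hde' : d' = e' := h30.symm
    refine ⟨hde, hde', ?_⟩
    have hβ : γ 0 1 = 0 := by
      rcases lt_trichotomy (γ 0 1) 0 with h | h | h
      · exfalso
        have h1' : γ 0 1 ≤ -1 := by omega
        have : γ 0 1 * e' ≤ -1 * e' :=
          mul_le_mul_of_nonneg_right h1' (by omega)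
        omega
      · exact h
      · exfalso
        have h1' : 1 ≤ γ 0 1 := by omega
        have : 1 * e' ≤ γ 0 1 * e' :=
          mul_le_mul_of_nonneg_right h1' (by omega)
        omega
    rw [hβ, zero_mul, zero_add] at h31
    exact h31.symm
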